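/- Let k ≥ 1, let V be a set, let R₁, …, R_k ⊆ V × V be finite relations with |R_i| ≤ N for every i. Then the number of tuples (a₁, …, a_{k+1}) ∈ V^{k+1} such that (a_i, a_{i+1}) ∈ R_i for every 1 ≤ i ≤ k is at most N^{⌈(k+1)/2⌉}. -/

import Mathlib

open Set

/-- The set of `k`-paths. -/
def stmt7PathSet {V : Type*} {k : ℕ} (R : Fin k → Set (V × V)) : Set (Fin (k + 1) → V) :=
  {a | ∀ i : Fin k, (a i.castSucc, a i.succ) ∈ R i}

/-- The edge map from paths to the pi type of edges, injective for `k ≥ 1`. -/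
lemma stmt7_edge_inj {V : Type*} {k : ℕ} (hk : 1 ≤ k) (R : Fin k → Set (V × V)) :
    Function.Injective (fun (a : stmt7PathSet R) (i : Fin k) =>
      (⟨(a.1 i.castSucc, a.1 i.succ), a.2 i⟩ : R i)) := by
  rintro ⟨a, ha⟩ ⟨b, hb⟩ h
  simp only [Subtype.mk.injEq] at h ⊢
  funext j
  rcases lt_or_ge j.val k with hj | hj
  · have := congrArg (fun f => (f ⟨j.val, hj⟩ : R ⟨j.val, hj⟩).1.1) h
    simpa [Fin.castSucc, Fin.castAdd, Fin.castLE, Fin.ext_iff] using this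
  · have hjk : j.val = k := by omega
    have hlt : k - 1 < k := by omega
    have := congrArg (fun f => (f ⟨k - 1, hlt⟩ : R ⟨k - 1, hlt⟩).1.2) h
    have e1 : j = Fin.succ ⟨k - 1, hlt⟩ := by
      ext; simp [hjk]; omega
    rw [e1]
    simpa using this

lemma stmt7_finite {V : Type*} {k : ℕ} (hk : 1 ≤ k) (R : Fin k → Set (V × V))
    (hfin : ∀ i, (R i).Finite) : (stmt7PathSet R).Finite := by
  have : ∀ i, Finite (R i) := fun i => (hfin i).to_subtype
  have : Finite (∀ i : Fin k, R i) := by infer_instance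
  have := Finite.of_injective _ (stmt7_edge_inj hk R)
  exact Set.toFinite _

lemma stmt7_base {V : Type*} {k : ℕ} (hk : 1 ≤ k) (R : Fin k → Set (V × V))
    (hfin : ∀ i, (R i).Finite) (N : ℕ) (hN : ∀ i, (R i).ncard ≤ N) :
    Nat.card (stmt7PathSet R) ≤ N ^ k := by
  have hF : ∀ i, Finite (R i) := fun i => (hfin i).to_subtype
  calc Nat.card (stmt7PathSet R) ≤ Nat.card (∀ i : Fin k, R i) :=
        Nat.card_le_card_of_injective _ (stmt7_edge_inj hk R)
    _ = ∏ i : Fin k, Nat.card (R i) := Nat.card_pi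
    _ ≤ ∏ i : Fin k, N := by
        apply Finset.prod_le_prod
        · intro i _; exact Nat.zero_le _
        · intro i _
          rw [Nat.card_coe_set_eq]
          exact hN i
    _ = N ^ k := by simp

lemma stmt7_aux {V : Type*} (N : ℕ) :
    ∀ k, 1 ≤ k → ∀ R : Fin k → Set (V × V), (∀ i, (R i).Finite) →
      (∀ i, (R i).ncard ≤ N) → Nat.card (stmt7PathSet R) ≤ N ^ ((k + 2) / 2) := by
  intro k
  induction k using Nat.strong_induction_on with
  | _ k IH =>
    match k with
    | 0 => intro h; omega
    | 1 => intro _ R hfin hN; simpa using stmt7_base (le_refl 1) R hfin N hN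
    | 2 => intro _ R hfin hN; simpa using stmt7_base (by norm_num) R hfin N hN
    | (n + 3) =>
      intro _ R hfin hN
      set k := n + 1 with hkdef
      -- R : Fin (k + 2) → Set (V × V), paths in Fin (k + 3) → V
      set R' : Fin k → Set (V × V) := fun i => R (Fin.castLE (by omega) i) with hR'
      have hR'fin : ∀ i, (R' i).Finite := fun i => hfin _
      have hR'N : ∀ i, (R' i).ncard ≤ N := fun i => hN _
      have hlast : (k + 1 : ℕ) < k + 2 := by omega
      set last : Fin (k + 2) := ⟨k + 1, hlast⟩ with hlastdef
      have hFlast : Finite (R last) := (hfin last).to_subtype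
      have hFpath : Finite (stmt7PathSet R') :=
        (stmt7_finite (by omega) R' hR'fin).to_subtype
      -- injection from paths of length k+2 into (paths of length k) × (R last)
      set G : stmt7PathSet R → stmt7PathSet R' × R last := fun a =>
        (⟨fun j : Fin (k + 1) => a.1 (Fin.castLE (by omega) j), by
          intro i
          have := a.2 (Fin.castLE (by omega) i)
          convert this using 2 <;> rfl⟩,
         ⟨(a.1 last.castSucc, a.1 last.succ), a.2 last⟩) with hG
      have hGinj : Function.Injective G := by
        rintro ⟨a, ha⟩ ⟨b, hb⟩ h
        simp only [hG, Prod.mk.injEq, Subtype.mk.injEq] at h ⊢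
        obtain ⟨h1, h2, h3⟩ := h
        funext j
        rcases lt_or_ge j.val (k + 1) with hj | hj
        · have := congrFun (congrArg Subtype.val h1) ⟨j.val, hj⟩
          simpa [Fin.castLE, Fin.ext_iff] using this
        · rcases Nat.lt_or_ge j.val (k + 2) with hj2 | hj2
          · have e1 : j = last.castSucc := by ext; simp [hlastdef]; omega
            rw [e1]; exact h2
          · have e1 : j = last.succ := by
              ext; simp [hlastdef]; omega
            rw [e1]; exact h3
      calc Nat.card (stmt7PathSet R) ≤ Nat.card (stmt7PathSet R' × R last) :=
            Nat.card_le_card_of_injective G hGinj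
        _ = Nat.card (stmt7PathSet R') * Nat.card (R last) := Nat.card_prod _ _
        _ ≤ N ^ ((k + 2) / 2) * N := by
            apply Nat.mul_le_mul
            · exact IH k (by omega) (by omega) R' hR'fin hR'N
            · rw [Nat.card_coe_set_eq]; exact hN last
        _ = N ^ ((n + 3 + 2) / 2) := by
            rw [← pow_succ]
            congr 1
            omega

theorem stmt7 {V : Type*} (k : ℕ) (hk : 1 ≤ k) (R : Fin k → Set (V × V))
    (hfin : ∀ i, (R i).Finite) (N : ℕ) (hN : ∀ i, (R i).ncard ≤ N) :
    ({a : Fin (k + 1) → V | ∀ i : Fin k, (a i.castSucc, a i.succ) ∈ R i}).ncard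
      ≤ N ^ ((k + 2) / 2) := by
  have := stmt7_aux N k hk R hfin hN
  rw [← Nat.card_coe_set_eq]
  exact this
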